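/- Let I be a finite group acting transitively on a set Δ. Suppose H ≤ J ≤ I, J is transitive on Δ, and x, y ∈ Δ are points with J_x ≤ H and J_y ≤ H. Set P := x^H (the H-orbit of x), Q := y^H, and Y := N_I(J). Then there exists σ ∈ Y such that {P^j : j ∈ J}^σ = {Q^j : j ∈ J} if and only if x and y lie in the same orbit of N_Y(H) on Δ. In particular, the two systems of blocks {P^j : j ∈ J} and {Q^j : j ∈ J} are identical if and only if x and y lie in the same orbit of N_J(H) on Δ. -/

import Mathlib

section Aux

variable {I : Type*} [Group I] {Δ : Type*} [MulAction I Δ]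

private lemma img_comp (g j : I) (S : Set Δ) :
    (fun z : Δ => g • z) '' ((fun z : Δ => j • z) '' S) = (fun z : Δ => (g * j) • z) '' S := by
  rw [← Set.image_comp]
  simp [Function.comp_def, mul_smul]

private lemma img_one (S : Set Δ) : (fun z : Δ => (1 : I) • z) '' S = S := by simp

private lemma mem_orb (H : Subgroup I) (x : Δ) : x ∈ {z : Δ | ∃ h ∈ H, z = h • x} :=
  ⟨1, H.one_mem, by simp⟩

/-- If `g ∈ J` fixes the block `Hx` setwise, then `g ∈ H` (using `J_x ≤ H`). -/
private lemma stab_mem (H J : Subgroup I) (hHJ : H ≤ J) (x : Δ)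
    (hJx : ∀ g ∈ J, g • x = x → g ∈ H) (g : I) (hg : g ∈ J)
    (h : (fun z : Δ => g • z) '' {z | ∃ h ∈ H, z = h • x} = {z | ∃ h ∈ H, z = h • x}) :
    g ∈ H := by
  have hx : g • x ∈ {z : Δ | ∃ h ∈ H, z = h • x} := by
    rw [← h]; exact ⟨x, mem_orb H x, rfl⟩
  obtain ⟨h', hh', he⟩ := hx
  have hfix : (h'⁻¹ * g) • x = x := by
    rw [mul_smul, he, inv_smul_smul]
  have hm : h'⁻¹ * g ∈ H := hJx _ (mul_mem (J.inv_mem (hHJ hh')) hg) hfix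
  have := mul_mem hh' hm
  simpa using this

/-- Elements of `H` preserve the block `Hx`. -/
private lemma mem_img (H : Subgroup I) (x : Δ) (h : I) (hh : h ∈ H) :
    (fun z : Δ => h • z) '' {z : Δ | ∃ h' ∈ H, z = h' • x} = {z : Δ | ∃ h' ∈ H, z = h' • x} := by
  ext z
  constructor
  · rintro ⟨w, ⟨h', hh', rfl⟩, rfl⟩
    exact ⟨h * h', mul_mem hh hh', (mul_smul _ _ _).symm⟩
  · rintro ⟨h', hh', rfl⟩
    exact ⟨(h⁻¹ * h') • x, ⟨h⁻¹ * h', mul_mem (H.inv_mem hh) hh', rfl⟩, by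
      simp [mul_smul]⟩

/-- `ν ∈ N(H)` maps the block `Hx` to `H(νx)`. -/
private lemma norm_img (H : Subgroup I) (x : Δ) (ν : I) (hν : ν ∈ Subgroup.normalizer (H : Set I)) :
    (fun z : Δ => ν • z) '' {z : Δ | ∃ h ∈ H, z = h • x} = {z : Δ | ∃ h ∈ H, z = h • (ν • x)} := by
  rw [Subgroup.mem_normalizer_iff] at hν
  ext z
  constructor
  · rintro ⟨w, ⟨h, hh, rfl⟩, rfl⟩
    exact ⟨ν * h * ν⁻¹, (hν h).1 hh, by simp [mul_smul]⟩
  · rintro ⟨h, hh, rfl⟩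
    refine ⟨(ν⁻¹ * h * ν) • x, ⟨ν⁻¹ * h * ν, ?_, rfl⟩, by simp [mul_smul]⟩
    apply (hν (ν⁻¹ * h * ν)).2
    have : ν * (ν⁻¹ * h * ν) * ν⁻¹ = h := by group
    rw [this]; exact hh

/-- Key: if `ν ∈ N(J)` maps the block `Hx` to the block `Hy`, then `ν ∈ N(H)`. -/
private lemma key_norm (H J : Subgroup I) (hHJ : H ≤ J) (x y : Δ)
    (hJx : ∀ g ∈ J, g • x = x → g ∈ H) (hJy : ∀ g ∈ J, g • y = y → g ∈ H)
    (ν : I) (hνJ : ν ∈ Subgroup.normalizer (J : Set I))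
    (himg : (fun z : Δ => ν • z) '' {z | ∃ h ∈ H, z = h • x} = {z | ∃ h ∈ H, z = h • y}) :
    ν ∈ Subgroup.normalizer (H : Set I) := by
  rw [Subgroup.mem_normalizer_iff] at hνJ ⊢
  intro n
  constructor
  · intro hn
    apply stab_mem H J hHJ y hJy (ν * n * ν⁻¹) ((hνJ n).1 (hHJ hn))
    rw [← himg, img_comp, show ν * n * ν⁻¹ * ν = ν * n by group, ← img_comp,
      mem_img H x n hn, himg]
  · intro hn
    have hnJ : n ∈ J := (hνJ n).2 (hHJ hn)
    apply stab_mem H J hHJ x hJx n hnJ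
    have h1 : (fun z : Δ => (ν * n * ν⁻¹ * ν) • z) '' {z : Δ | ∃ h ∈ H, z = h • x}
        = (fun z : Δ => ν • z) '' {z : Δ | ∃ h ∈ H, z = h • x} := by
      rw [← img_comp, himg, mem_img H y _ hn]
    have h2 := congrArg (fun S : Set Δ => (fun z : Δ => ν⁻¹ • z) '' S) h1
    simp only [img_comp] at h2
    rw [show ν⁻¹ * (ν * n * ν⁻¹ * ν) = n by group, show ν⁻¹ * ν = 1 by group, img_one] at h2
    exact h2

end Aux

/-- Lemma 4.14: Let I be a finite group acting transitively on Δ, H ≤ J ≤ I with J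
transitive on Δ, and x, y ∈ Δ with J_x ≤ H and J_y ≤ H. Set P := x^H, Q := y^H and
Y := N_I(J). Then there exists σ ∈ Y with (P^J)^σ = Q^J iff x and y are in the same
N_Y(H)-orbit on Δ; in particular P^J = Q^J iff x and y are in the same N_J(H)-orbit. -/
theorem stmt_16 {I : Type*} [Group I] [Finite I] {Δ : Type*} [MulAction I Δ]
    (htrans : ∀ a b : Δ, ∃ g : I, g • a = b)
    (H J : Subgroup I) (hHJ : H ≤ J)
    (hJtrans : ∀ a b : Δ, ∃ j ∈ J, j • a = b)
    (x y : Δ)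
    (hJx : ∀ g ∈ J, g • x = x → g ∈ H)
    (hJy : ∀ g ∈ J, g • y = y → g ∈ H) :
    ((∃ σ ∈ Subgroup.normalizer (J : Set I),
        (fun S : Set Δ => (fun z => σ • z) '' S) ''
            {S : Set Δ | ∃ j ∈ J, S = (fun z => j • z) '' {z | ∃ h ∈ H, z = h • x}} =
          {S : Set Δ | ∃ j ∈ J, S = (fun z => j • z) '' {z | ∃ h ∈ H, z = h • y}}) ↔
      ∃ ν ∈ Subgroup.normalizer (H : Set I) ⊓ Subgroup.normalizer (J : Set I), ν • x = y) ∧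
    (({S : Set Δ | ∃ j ∈ J, S = (fun z => j • z) '' {z | ∃ h ∈ H, z = h • x}} =
        {S : Set Δ | ∃ j ∈ J, S = (fun z => j • z) '' {z | ∃ h ∈ H, z = h • y}}) ↔
      ∃ ν ∈ Subgroup.normalizer (H : Set I) ⊓ J, ν • x = y) := by
  constructor
  · -- Part (a)
    constructor
    · rintro ⟨σ, hσ, hset⟩
      -- P itself is in the system
      have hP : {z : Δ | ∃ h ∈ H, z = h • x} ∈
          {S : Set Δ | ∃ j ∈ J, S = (fun z => j • z) '' {z | ∃ h ∈ H, z = h • x}} :=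
        ⟨1, J.one_mem, (img_one _).symm⟩
      have hmem : (fun z : Δ => σ • z) '' {z : Δ | ∃ h ∈ H, z = h • x} ∈
          {S : Set Δ | ∃ j ∈ J, S = (fun z => j • z) '' {z | ∃ h ∈ H, z = h • y}} := by
        rw [← hset]; exact Set.mem_image_of_mem _ hP
      obtain ⟨j, hj, hQ⟩ := hmem
      set τ : I := j⁻¹ * σ with hτdef
      have hτJ : τ ∈ Subgroup.normalizer (J : Set I) :=
        mul_mem ((Subgroup.normalizer (J : Set I)).inv_mem (Subgroup.le_normalizer hj)) hσ
      have hτP : (fun z : Δ => τ • z) '' {z : Δ | ∃ h ∈ H, z = h • x}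
          = {z : Δ | ∃ h ∈ H, z = h • y} := by
        rw [hτdef, ← img_comp, hQ, img_comp, show j⁻¹ * j = 1 by group, img_one]
      have hτx : τ • x ∈ {z : Δ | ∃ h ∈ H, z = h • y} := by
        rw [← hτP]; exact Set.mem_image_of_mem _ (mem_orb H x)
      obtain ⟨h, hh, he⟩ := hτx
      refine ⟨h⁻¹ * τ, ?_, ?_⟩
      · rw [Subgroup.mem_inf]
        have hνJ : h⁻¹ * τ ∈ Subgroup.normalizer (J : Set I) :=
          mul_mem ((Subgroup.normalizer (J : Set I)).inv_mem (Subgroup.le_normalizer (hHJ hh))) hτJ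
        refine ⟨?_, hνJ⟩
        apply key_norm H J hHJ x y hJx hJy _ hνJ
        rw [← img_comp, hτP, mem_img H y h⁻¹ (H.inv_mem hh)]
      · rw [mul_smul, he, inv_smul_smul]
    · rintro ⟨ν, hν, hxy⟩
      rw [Subgroup.mem_inf] at hν
      obtain ⟨hνH, hνJ⟩ := hν
      have hνP : (fun z : Δ => ν • z) '' {z : Δ | ∃ h ∈ H, z = h • x}
          = {z : Δ | ∃ h ∈ H, z = h • y} := by
        rw [norm_img H x ν hνH, hxy]
      refine ⟨ν, hνJ, ?_⟩
      rw [Subgroup.mem_normalizer_iff] at hνJ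
      ext S
      constructor
      · rintro ⟨T, ⟨j, hj, rfl⟩, rfl⟩
        refine ⟨ν * j * ν⁻¹, (hνJ j).1 hj, ?_⟩
        beta_reduce
        rw [img_comp, ← hνP, img_comp]
        congr 2
        group
      · rintro ⟨j, hj, rfl⟩
        refine ⟨(fun z : Δ => (ν⁻¹ * j * ν) • z) '' {z : Δ | ∃ h ∈ H, z = h • x},
          ⟨ν⁻¹ * j * ν, ?_, rfl⟩, ?_⟩
        · apply (hνJ (ν⁻¹ * j * ν)).2
          have : ν * (ν⁻¹ * j * ν) * ν⁻¹ = j := by group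
          rw [this]; exact hj
        · beta_reduce
          rw [img_comp, ← hνP, img_comp]
          congr 2
          group
  · -- Part (b)
    constructor
    · intro hset
      have hQ : {z : Δ | ∃ h ∈ H, z = h • y} ∈
          {S : Set Δ | ∃ j ∈ J, S = (fun z => j • z) '' {z | ∃ h ∈ H, z = h • x}} := by
        rw [hset]; exact ⟨1, J.one_mem, (img_one _).symm⟩
      obtain ⟨j, hj, hQ⟩ := hQ
      have hy : y ∈ (fun z : Δ => j • z) '' {z : Δ | ∃ h ∈ H, z = h • x} := by
        rw [← hQ]; exact mem_orb H y
      obtain ⟨w, ⟨h, hh, rfl⟩, he⟩ := hy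
      set ν : I := j * h with hνdef
      have hνJ : ν ∈ J := mul_mem hj (hHJ hh)
      have hνx : ν • x = y := by rw [hνdef, mul_smul]; exact he
      have hνP : (fun z : Δ => ν • z) '' {z : Δ | ∃ h ∈ H, z = h • x}
          = {z : Δ | ∃ h ∈ H, z = h • y} := by
        rw [hνdef, ← img_comp, mem_img H x h hh, hQ]
      refine ⟨ν, ?_, hνx⟩
      rw [Subgroup.mem_inf]
      exact ⟨key_norm H J hHJ x y hJx hJy ν (Subgroup.le_normalizer hνJ) hνP, hνJ⟩
    · rintro ⟨ν, hν, hxy⟩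
      rw [Subgroup.mem_inf] at hν
      obtain ⟨hνH, hνJ⟩ := hν
      have hνP : (fun z : Δ => ν • z) '' {z : Δ | ∃ h ∈ H, z = h • x}
          = {z : Δ | ∃ h ∈ H, z = h • y} := by
        rw [norm_img H x ν hνH, hxy]
      ext S
      constructor
      · rintro ⟨j, hj, rfl⟩
        refine ⟨j * ν⁻¹, mul_mem hj (J.inv_mem hνJ), ?_⟩
        rw [← hνP, img_comp]
        congr 2
        group
      · rintro ⟨j, hj, rfl⟩
        refine ⟨j * ν, mul_mem hj hνJ, ?_⟩
        rw [← hνP, img_comp]
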